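/- arXiv:2203.14075 — 4 statements merged into one kernel-verified Lean document; each statement's English description precedes it below -/
import Mathlib

section
/- Let a, b : ℝ → ℝ be functions that are differentiable at every point of the open interval (−1, 1). Assume that for every t ∈ (−1, 1) and every pair of integers (m, n) ≠ (0, 0) one has m·a′(t) + n·b′(t) ≠ 0. Then the set { t ∈ (−1, 1) : there exist integers (m, n, p) ≠ (0, 0, 0) with m·a(t) + n·b(t) + p = 0 } is countable. -/
open Set Filter Topology TopologicalSpace

lemma countable_of_isolated {s : Set ℝ} (h : ∀ x ∈ s, {x} ∈ 𝓝[s] x) : s.Countable := by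
  obtain ⟨t, hts, htc, hcov⟩ := countable_cover_nhdsWithin h
  exact htc.mono (hcov.trans (by simp))

/-- Abstract core of Lemma 9: if the derivatives `(a'(t), b'(t))` are never rationally
dependent on `(-1,1)`, then the set of `t` where `a(t), b(t), 1` are rationally dependent
is countable. -/
theorem stmt0 (a b : ℝ → ℝ)
    (ha : ∀ t ∈ Ioo (-1 : ℝ) 1, DifferentiableAt ℝ a t)
    (hb : ∀ t ∈ Ioo (-1 : ℝ) 1, DifferentiableAt ℝ b t)
    (h : ∀ t ∈ Ioo (-1 : ℝ) 1, ∀ m n : ℤ, (m, n) ≠ (0, 0) →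
      (m : ℝ) * deriv a t + (n : ℝ) * deriv b t ≠ 0) :
    {t ∈ Ioo (-1 : ℝ) 1 | ∃ m n p : ℤ, (m, n, p) ≠ (0, 0, 0) ∧
      (m : ℝ) * a t + (n : ℝ) * b t + (p : ℝ) = 0}.Countable := by
  have hsub : {t ∈ Ioo (-1 : ℝ) 1 | ∃ m n p : ℤ, (m, n, p) ≠ (0, 0, 0) ∧
      (m : ℝ) * a t + (n : ℝ) * b t + (p : ℝ) = 0} ⊆
      ⋃ q : ℤ × ℤ × ℤ, {t ∈ Ioo (-1 : ℝ) 1 | q ≠ (0, 0, 0) ∧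
        (q.1 : ℝ) * a t + (q.2.1 : ℝ) * b t + (q.2.2 : ℝ) = 0} := by
    rintro t ⟨ht, m, n, p, hq, he⟩
    exact mem_iUnion.2 ⟨(m, n, p), ht, hq, he⟩
  refine Set.Countable.mono hsub (countable_iUnion fun q => ?_)
  obtain ⟨m, n, p⟩ := q
  by_cases hmn : (m, n) = (0, 0)
  · obtain ⟨rfl, rfl⟩ := Prod.mk.injEq .. ▸ hmn
    refine Set.Countable.mono ?_ countable_empty
    rintro t ⟨ht, hq, he⟩
    have hp : p ≠ 0 := by simpa using hq
    simp only [Int.cast_zero, zero_mul, zero_add] at he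
    exact absurd (by exact_mod_cast he) hp
  · set s : Set ℝ := {t ∈ Ioo (-1 : ℝ) 1 | (m, n, p) ≠ (0, 0, 0) ∧
      (m : ℝ) * a t + (n : ℝ) * b t + (p : ℝ) = 0}
    apply countable_of_isolated
    rintro t ⟨ht, -, he⟩
    set f : ℝ → ℝ := fun z => (m : ℝ) * a z + (n : ℝ) * b z + (p : ℝ) with hf
    have hd : HasDerivAt f ((m : ℝ) * deriv a t + (n : ℝ) * deriv b t) t := by
      exact ((((ha t ht).hasDerivAt.const_mul (m : ℝ)).add
        ((hb t ht).hasDerivAt.const_mul (n : ℝ))).add_const (p : ℝ))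
    have hne := hd.eventually_ne (c := f t) (h t ht m n hmn)
    have h2 : ∀ᶠ z in 𝓝[s] t, z ≠ t → f z ≠ f t :=
      (eventually_nhdsWithin_iff.mp hne).filter_mono nhdsWithin_le_nhds
    have h1 : ∀ᶠ z in 𝓝[s] t, z ∈ s := self_mem_nhdsWithin
    refine Filter.mem_of_superset (Filter.inter_mem h1 h2) ?_
    rintro z ⟨hzs, hz⟩
    by_contra hzt
    exact hz (by simpa using hzt) (by show (m:ℝ) * a z + n * b z + p = (m:ℝ) * a t + n * b t + p; rw [hzs.2.2, he])
end

section
/- Let a, b : ℝ → ℝ be functions that are differentiable at every point of the open interval (−1, 1). Assume that for every t ∈ (−1, 1) and every pair of integers (m, n) ≠ (0, 0) one has m·a′(t) + n·b′(t) ≠ 0. Then the set of t ∈ (−1, 1) such that a(t), b(t), 1 are rationally independent (i.e., for all integers m, n, p, the equation m·a(t) + n·b(t) + p = 0 implies m = n = p = 0) is uncountable. -/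
open Set

/-- Auxiliary: the zero set of a function with everywhere nonvanishing derivative on `Ioo (-1) 1`
is countable. -/
lemma zero_set_countable (f : ℝ → ℝ)
    (hf : ∀ t ∈ Ioo (-1 : ℝ) 1, HasDerivAt f (deriv f t) t)
    (hf' : ∀ t ∈ Ioo (-1 : ℝ) 1, deriv f t ≠ 0) :
    ({t ∈ Ioo (-1 : ℝ) 1 | f t = 0}).Countable := by
  set Z : Set ℝ := {t ∈ Ioo (-1 : ℝ) 1 | f t = 0} with hZ
  have hdisc : DiscreteTopology Z := by
    rw [discreteTopology_subtype_iff]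
    intro t ht
    rw [Filter.inf_principal_eq_bot]
    have hne := (hf t ht.1).eventually_ne (c := f t) (hf' t ht.1)
    filter_upwards [hne] with z hz hzZ
    exact hz (hzZ.2.trans ht.2.symm)
  have : Countable Z := by
    have : TopologicalSpace.SeparableSpace Z := inferInstance
    exact (TopologicalSpace.separableSpace_iff_countable).mp this
  exact Set.countable_coe_iff.mp this

/-- Abstract form of the conclusion of Lemma 9: the set of parameters `t ∈ (-1,1)` at which
`a(t), b(t), 1` are rationally independent is uncountable. -/
theorem stmt1 (a b : ℝ → ℝ)
    (ha : ∀ t ∈ Ioo (-1 : ℝ) 1, DifferentiableAt ℝ a t)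
    (hb : ∀ t ∈ Ioo (-1 : ℝ) 1, DifferentiableAt ℝ b t)
    (h : ∀ t ∈ Ioo (-1 : ℝ) 1, ∀ m n : ℤ, (m, n) ≠ (0, 0) →
      (m : ℝ) * deriv a t + (n : ℝ) * deriv b t ≠ 0) :
    ¬ ({t ∈ Ioo (-1 : ℝ) 1 | ∀ m n p : ℤ,
        (m : ℝ) * a t + (n : ℝ) * b t + (p : ℝ) = 0 → m = 0 ∧ n = 0 ∧ p = 0}).Countable := by
  intro hc
  -- the "bad" zero sets
  set Z : ℤ × ℤ × ℤ → Set ℝ := fun q =>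
    {t ∈ Ioo (-1 : ℝ) 1 | (q.1 : ℝ) * a t + (q.2.1 : ℝ) * b t + (q.2.2 : ℝ) = 0} with hZdef
  have hZc : ∀ q : ℤ × ℤ × ℤ, q ≠ (0, 0, 0) → (Z q).Countable := by
    rintro ⟨m, n, p⟩ hq
    by_cases hmn : (m, n) = (0, 0)
    · -- then p ≠ 0, and the set is empty
      have hm : m = 0 := (Prod.ext_iff.mp hmn).1
      have hn : n = 0 := (Prod.ext_iff.mp hmn).2
      have hp : p ≠ 0 := fun hp => hq (by simp [hm, hn, hp])
      have : Z (m, n, p) = ∅ := by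
        ext t
        simp only [hZdef, mem_setOf_eq, mem_empty_iff_false, iff_false, not_and]
        intro _ heq
        simp only [hm, hn, Int.cast_zero, zero_mul, zero_add] at heq
        exact hp (by exact_mod_cast heq)
      rw [this]; exact countable_empty
    · -- main case: derivative is nonvanishing
      set f : ℝ → ℝ := fun t => (m : ℝ) * a t + (n : ℝ) * b t + (p : ℝ) with hfdef
      have hder : ∀ t ∈ Ioo (-1 : ℝ) 1,
          HasDerivAt f ((m : ℝ) * deriv a t + (n : ℝ) * deriv b t) t := by
        intro t ht
        exact ((((ha t ht).hasDerivAt.const_mul (m : ℝ)).add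
          ((hb t ht).hasDerivAt.const_mul (n : ℝ)))).add_const _
      have hderiv : ∀ t ∈ Ioo (-1 : ℝ) 1,
          deriv f t = (m : ℝ) * deriv a t + (n : ℝ) * deriv b t := fun t ht =>
        (hder t ht).deriv
      have := zero_set_countable f
        (fun t ht => (hderiv t ht) ▸ hder t ht)
        (fun t ht => (hderiv t ht) ▸ h t ht m n hmn)
      exact this
  -- the bad set
  have hBc : ({t ∈ Ioo (-1 : ℝ) 1 | ¬ ∀ m n p : ℤ,
      (m : ℝ) * a t + (n : ℝ) * b t + (p : ℝ) = 0 → m = 0 ∧ n = 0 ∧ p = 0}).Countable := by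
    have hsub : {t ∈ Ioo (-1 : ℝ) 1 | ¬ ∀ m n p : ℤ,
        (m : ℝ) * a t + (n : ℝ) * b t + (p : ℝ) = 0 → m = 0 ∧ n = 0 ∧ p = 0} ⊆
        ⋃ q ∈ {q : ℤ × ℤ × ℤ | q ≠ (0, 0, 0)}, Z q := by
      rintro t ⟨ht, hnind⟩
      push_neg at hnind
      obtain ⟨m, n, p, heq, hne⟩ := hnind
      refine mem_biUnion (show (m, n, p) ∈ {q : ℤ × ℤ × ℤ | q ≠ (0, 0, 0)} from ?_) ⟨ht, heq⟩
      intro hq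
      simp only [Prod.mk.injEq] at hq
      exact hne hq.1 hq.2.1 hq.2.2
    exact Set.Countable.mono hsub
      (Set.Countable.biUnion (Set.to_countable _) (fun q hq => hZc q hq))
  -- Ioo is the union, hence countable: contradiction
  have hIoo : Ioo (-1 : ℝ) 1 ⊆
      {t ∈ Ioo (-1 : ℝ) 1 | ∀ m n p : ℤ,
        (m : ℝ) * a t + (n : ℝ) * b t + (p : ℝ) = 0 → m = 0 ∧ n = 0 ∧ p = 0} ∪
      {t ∈ Ioo (-1 : ℝ) 1 | ¬ ∀ m n p : ℤ,
        (m : ℝ) * a t + (n : ℝ) * b t + (p : ℝ) = 0 → m = 0 ∧ n = 0 ∧ p = 0} := by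
    intro t ht
    by_cases hind : ∀ m n p : ℤ,
        (m : ℝ) * a t + (n : ℝ) * b t + (p : ℝ) = 0 → m = 0 ∧ n = 0 ∧ p = 0
    · exact Or.inl ⟨ht, hind⟩
    · exact Or.inr ⟨ht, hind⟩
  have hcnt : (Ioo (-1 : ℝ) 1).Countable := Set.Countable.mono hIoo (hc.union hBc)
  have hcard : Cardinal.mk (Ioo (-1 : ℝ) 1) = Cardinal.continuum :=
    Cardinal.mk_Ioo_real (by norm_num)
  have hle : Cardinal.mk (Ioo (-1 : ℝ) 1) ≤ Cardinal.aleph0 :=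
    Cardinal.mk_le_aleph0_iff.mpr hcnt.to_subtype
  rw [hcard] at hle
  exact absurd hle (not_le.mpr Cardinal.aleph0_lt_continuum)
end

section
/- Let s and p be real numbers. Every complex root z of the quadratic polynomial z² − s·z + p has absolute value strictly greater than 1 if and only if |p| > 1 and there exists t ∈ (−1, 1) with s = t·(1 + p). -/
private lemma facA (s p : ℝ) (hD : 4 * p ≤ s ^ 2) :
    ∃ r1 r2 : ℝ, r1 + r2 = s ∧ r1 * r2 = p ∧
      ∀ z : ℂ, z ^ 2 - (s : ℂ) * z + (p : ℂ) = (z - (r1 : ℂ)) * (z - (r2 : ℂ)) := by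
  have hr : Real.sqrt (s ^ 2 - 4 * p) ^ 2 = s ^ 2 - 4 * p :=
    Real.sq_sqrt (by linarith)
  refine ⟨(s + Real.sqrt (s ^ 2 - 4 * p)) / 2, (s - Real.sqrt (s ^ 2 - 4 * p)) / 2,
    by ring, by linear_combination (-(1:ℝ)/4) * hr, ?_⟩
  intro z
  have hs' : (((s + Real.sqrt (s ^ 2 - 4 * p)) / 2 : ℝ) : ℂ) +
      (((s - Real.sqrt (s ^ 2 - 4 * p)) / 2 : ℝ) : ℂ) = (s : ℂ) := by
    push_cast; ring
  have hp' : (((s + Real.sqrt (s ^ 2 - 4 * p)) / 2 : ℝ) : ℂ) *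
      (((s - Real.sqrt (s ^ 2 - 4 * p)) / 2 : ℝ) : ℂ) = (p : ℂ) := by
    have : ((s + Real.sqrt (s ^ 2 - 4 * p)) / 2) * ((s - Real.sqrt (s ^ 2 - 4 * p)) / 2) = p := by
      linear_combination (-(1:ℝ)/4) * hr
    exact_mod_cast this
  linear_combination z * hs' - hp'

private lemma facB (s p : ℝ) (hD : s ^ 2 < 4 * p) :
    ∃ z1 z2 : ℂ, (starRingEnd ℂ) z1 = z2 ∧ z1 * z2 = (p : ℂ) ∧
      ∀ z : ℂ, z ^ 2 - (s : ℂ) * z + (p : ℂ) = (z - z1) * (z - z2) := by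
  have hr : Real.sqrt (4 * p - s ^ 2) ^ 2 = 4 * p - s ^ 2 :=
    Real.sq_sqrt (by linarith)
  have hr' : ((Real.sqrt (4 * p - s ^ 2) : ℝ) : ℂ) ^ 2 = 4 * (p : ℂ) - (s : ℂ) ^ 2 := by
    exact_mod_cast hr
  have hI : (Complex.I) ^ 2 = -1 := Complex.I_sq
  refine ⟨((s : ℂ) + (Real.sqrt (4 * p - s ^ 2) : ℝ) * Complex.I) / 2,
    ((s : ℂ) - (Real.sqrt (4 * p - s ^ 2) : ℝ) * Complex.I) / 2, ?_, ?_, ?_⟩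
  · rw [map_div₀, map_add, map_mul, Complex.conj_ofReal, Complex.conj_ofReal,
      Complex.conj_I, map_ofNat]
    ring
  · linear_combination (-(Complex.I) ^ 2 / 4) * hr' + (((s:ℂ)^2 - 4*(p:ℂ)) / 4) * hI
  · intro z
    linear_combination (Complex.I ^ 2 / 4) * hr' + ((4*(p:ℂ) - (s:ℂ)^2) / 4) * hI

private lemma real_aux (a b : ℝ) (hk : 0 < (a - 1) * (b - 1)) (hp : 1 < a * b)
    (ha : 0 ≤ a) (hb0 : 0 ≤ b) : 1 < a ∧ 1 < b := by
  rcases lt_or_ge 1 a with h | h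
  · exact ⟨h, by nlinarith⟩
  · exfalso
    have hb1 : 1 < b := by nlinarith
    nlinarith

private lemma mk_t (s p : ℝ) (h : s ^ 2 < (1 + p) ^ 2) :
    ∃ t ∈ Set.Ioo (-1 : ℝ) 1, s = t * (1 + p) := by
  have h0 : (1 + p) ≠ 0 := by intro h0; rw [h0] at h; nlinarith [sq_nonneg s]
  refine ⟨s / (1 + p), ?_, by field_simp⟩
  have habs : |s / (1 + p)| < 1 := by
    rw [abs_div, div_lt_one (abs_pos.mpr h0)]
    nlinarith [sq_abs s, sq_abs (1 + p), abs_nonneg s, abs_nonneg (1 + p)]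
  exact Set.mem_Ioo.mpr (abs_lt.mp habs)

/-- Criterion for both roots of a real quadratic `z² - s z + p` to lie strictly outside the
closed unit disk (used in Lemma 2). -/
theorem stmt2 (s p : ℝ) :
    (∀ z : ℂ, z ^ 2 - (s : ℂ) * z + (p : ℂ) = 0 → 1 < ‖z‖) ↔
      (1 < |p| ∧ ∃ t ∈ Set.Ioo (-1 : ℝ) 1, s = t * (1 + p)) := by
  constructor
  · intro h
    rcases le_or_gt (4 * p) (s ^ 2) with hD | hD
    · obtain ⟨r1, r2, hsum, hprod, hfac⟩ := facA s p hD
      have h1 : 1 < |r1| := by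
        have := h ((r1 : ℝ) : ℂ) (by rw [hfac]; ring)
        rwa [Complex.norm_real, Real.norm_eq_abs] at this
      have h2 : 1 < |r2| := by
        have := h ((r2 : ℝ) : ℂ) (by rw [hfac]; ring)
        rwa [Complex.norm_real, Real.norm_eq_abs] at this
      have hp1 : 1 < |p| := by
        rw [← hprod, abs_mul]; nlinarith
      have ha1 : 1 < r1 ^ 2 := by nlinarith [sq_abs r1, abs_nonneg r1]
      have ha2 : 1 < r2 ^ 2 := by nlinarith [sq_abs r2, abs_nonneg r2]
      have hid : (1 + p) ^ 2 - s ^ 2 = (r1 ^ 2 - 1) * (r2 ^ 2 - 1) := by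
        linear_combination (r1 + r2 + s) * hsum - (p + r1 * r2 + 2) * hprod
      refine ⟨hp1, mk_t s p ?_⟩
      nlinarith [mul_pos (by linarith : (0:ℝ) < r1 ^ 2 - 1) (by linarith : (0:ℝ) < r2 ^ 2 - 1)]
    · obtain ⟨z1, z2, hconj, hz12, hfac⟩ := facB s p hD
      have h1 : 1 < ‖z1‖ := h z1 (by rw [hfac]; ring)
      have habs : ‖z2‖ = ‖z1‖ := by rw [← hconj, Complex.norm_conj]
      have hsq : ‖z1‖ * ‖z1‖ = |p| := by
        have h' : ‖z1 * z2‖ = ‖z1‖ * ‖z2‖ := norm_mul _ _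
        rw [hz12, Complex.norm_real, Real.norm_eq_abs, habs] at h'
        exact h'.symm
      have hp1 : 1 < |p| := by nlinarith
      have hppos : 0 < p := by nlinarith [sq_nonneg s]
      have hp2 : 1 < p := by rcases abs_cases p with ⟨h', _⟩ | ⟨h', _⟩ <;> linarith [abs_nonneg p]
      refine ⟨hp1, mk_t s p ?_⟩
      nlinarith [sq_nonneg (1 - p)]
  · rintro ⟨hp1, t, ht, hst⟩
    have hne : (1 + p) ≠ 0 := by
      intro h0
      have : p = -1 := by linarith
      rw [this] at hp1; norm_num at hp1
    have hs2 : s ^ 2 < (1 + p) ^ 2 := by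
      obtain ⟨ht1, ht2⟩ := Set.mem_Ioo.mp ht
      have hpos : 0 < (1 + p) ^ 2 := by positivity
      rw [hst]
      nlinarith [mul_pos (by linarith : (0:ℝ) < 1 - t) (by linarith : (0:ℝ) < 1 + t), hpos]
    intro z hz
    rcases le_or_gt (4 * p) (s ^ 2) with hD | hD
    · obtain ⟨r1, r2, hsum, hprod, hfac⟩ := facA s p hD
      have hid : (1 + p) ^ 2 - s ^ 2 = (r1 ^ 2 - 1) * (r2 ^ 2 - 1) := by
        linear_combination (r1 + r2 + s) * hsum - (p + r1 * r2 + 2) * hprod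
      have hk : 0 < (r1 ^ 2 - 1) * (r2 ^ 2 - 1) := by linarith
      have hpp : 1 < r1 ^ 2 * r2 ^ 2 := by
        have : (r1 * r2) ^ 2 = p ^ 2 := by rw [hprod]
        nlinarith [sq_abs p, abs_nonneg p]
      obtain ⟨hA, hB⟩ := real_aux (r1 ^ 2) (r2 ^ 2) hk hpp (sq_nonneg r1) (sq_nonneg r2)
      rw [hfac] at hz
      rcases mul_eq_zero.mp hz with h0 | h0
      · have : z = (r1 : ℂ) := by linear_combination h0
        rw [this, Complex.norm_real, Real.norm_eq_abs]
        nlinarith [sq_abs r1, abs_nonneg r1]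
      · have : z = (r2 : ℂ) := by linear_combination h0
        rw [this, Complex.norm_real, Real.norm_eq_abs]
        nlinarith [sq_abs r2, abs_nonneg r2]
    · obtain ⟨z1, z2, hconj, hz12, hfac⟩ := facB s p hD
      have habs : ‖z2‖ = ‖z1‖ := by rw [← hconj, Complex.norm_conj]
      have hsq : ‖z1‖ * ‖z1‖ = |p| := by
        have h' : ‖z1 * z2‖ = ‖z1‖ * ‖z2‖ := norm_mul _ _
        rw [hz12, Complex.norm_real, Real.norm_eq_abs, habs] at h'
        exact h'.symm
      have h1 : 1 < ‖z1‖ := by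
        nlinarith [norm_nonneg z1]
      rw [hfac] at hz
      rcases mul_eq_zero.mp hz with h0 | h0
      · have : z = z1 := by linear_combination h0
        rw [this]; exact h1
      · have : z = z2 := by linear_combination h0
        rw [this, habs]; exact h1
end

section
/- Let ω ∈ (0, π) be such that ω/π is either irrational or equal to p/q for coprime positive integers p, q with q ≥ 4. Then for every η ∈ ℝ there exist infinitely many even natural numbers k with sin(k·ω + η) > 0, and infinitely many even natural numbers k with sin(k·ω + η) < 0. -/
open Real Filter Topology

private lemma key (ω η : ℝ) (h1 : 0 < Real.sin ω) (h2 : Real.sin (2*ω) ≠ 0) (N : ℕ) :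
    ∃ m : ℕ, N < m ∧ 0 < Real.sin (m * (2*ω) + η) := by
  by_contra hcon
  push_neg at hcon
  set a : ℕ → ℝ := fun n => Real.sin (((N + 1 + n : ℕ) : ℝ) * (2*ω) + η) with ha
  have hale : ∀ n, a n ≤ 0 := fun n => hcon _ (by omega)
  set g : ℕ → ℝ := fun n => Real.cos (((N + 1 + n : ℕ) : ℝ) * (2*ω) + η - ω) with hg
  have hstep : ∀ n, a n = (g n - g (n+1)) / (2 * Real.sin ω) := by
    intro n
    set X : ℝ := ((N + 1 + n : ℕ) : ℝ) * (2*ω) + η with hX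
    have hx : ((N + 1 + (n+1) : ℕ) : ℝ) * (2*ω) + η - ω = X + ω := by
      rw [hX]; push_cast; ring
    have key2 : g n - g (n+1) = 2 * a n * Real.sin ω := by
      simp only [ha, hg, hx]
      rw [Real.cos_sub_cos]
      have e1 : (X - ω + (X + ω)) / 2 = X := by ring
      have e2 : (X - ω - (X + ω)) / 2 = -ω := by ring
      rw [e1, e2, Real.sin_neg]
      ring
    rw [key2]
    field_simp
  set T : ℕ → ℝ := fun n => ∑ i ∈ Finset.range n, a i with hT
  have hTsucc : ∀ n, T (n+1) = T n + a n := fun n => Finset.sum_range_succ a n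
  have hant : Antitone T := antitone_nat_of_succ_le (fun n => by
    rw [hTsucc]; linarith [hale n])
  have hTform : ∀ n, T n = (g 0 - g n) / (2 * Real.sin ω) := by
    intro n
    rw [hT]
    simp only
    calc ∑ i ∈ Finset.range n, a i
        = ∑ i ∈ Finset.range n, (g i - g (i+1)) / (2 * Real.sin ω) := by
          exact Finset.sum_congr rfl (fun i _ => hstep i)
      _ = (∑ i ∈ Finset.range n, (g i - g (i+1))) / (2 * Real.sin ω) := by
          rw [Finset.sum_div]
      _ = (g 0 - g n) / (2 * Real.sin ω) := by rw [Finset.sum_range_sub' g n]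
  have hbdd : BddBelow (Set.range T) := by
    refine ⟨-(1 / Real.sin ω), ?_⟩
    rintro x ⟨n, rfl⟩
    rw [hTform n]
    have hg0 : g 0 ≥ -1 := Real.neg_one_le_cos _
    have hgn : g n ≤ 1 := Real.cos_le_one _
    rw [le_div_iff₀ (by positivity : (0:ℝ) < 2 * Real.sin ω)]
    have he : (1 / Real.sin ω) * (2 * Real.sin ω) = 2 := by field_simp
    nlinarith
  have hconv : Tendsto T atTop (𝓝 (⨅ n, T n)) := tendsto_atTop_ciInf hant hbdd
  have hT1 : Tendsto (fun n => T (n+1)) atTop (𝓝 (⨅ n, T n)) :=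
    hconv.comp (tendsto_add_atTop_nat 1)
  have hA : Tendsto a atTop (𝓝 0) := by
    have := hT1.sub hconv
    simp only [sub_self] at this
    refine this.congr (fun n => ?_)
    rw [hTsucc]; ring
  have hA1 : Tendsto (fun n => a (n+1)) atTop (𝓝 0) := hA.comp (tendsto_add_atTop_nat 1)
  set c : ℕ → ℝ := fun n => Real.cos (((N + 1 + n : ℕ) : ℝ) * (2*ω) + η) with hc
  have hrec : ∀ n, a (n+1) = a n * Real.cos (2*ω) + c n * Real.sin (2*ω) := by
    intro n
    have hx : ((N + 1 + (n+1) : ℕ) : ℝ) * (2*ω) + η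
        = (((N + 1 + n : ℕ) : ℝ) * (2*ω) + η) + 2*ω := by push_cast; ring
    simp only [ha, hc, hx]
    rw [Real.sin_add]
  have hC : Tendsto c atTop (𝓝 0) := by
    have h3 : Tendsto (fun n => (a (n+1) - a n * Real.cos (2*ω)) / Real.sin (2*ω))
        atTop (𝓝 ((0 - 0 * Real.cos (2*ω)) / Real.sin (2*ω))) :=
      (hA1.sub (hA.mul_const _)).div_const _
    simp only [zero_mul, sub_zero] at h3
    rw [zero_div] at h3
    refine h3.congr (fun n => ?_)
    rw [hrec n]
    field_simp
    ring
  have hone : Tendsto (fun n => a n ^ 2 + c n ^ 2) atTop (𝓝 0) := by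
    have := (hA.pow 2).add (hC.pow 2)
    simpa using this
  have hone' : Tendsto (fun n => a n ^ 2 + c n ^ 2) atTop (𝓝 1) := by
    refine tendsto_const_nhds.congr (fun n => ?_)
    exact (Real.sin_sq_add_cos_sq _).symm
  exact one_ne_zero (tendsto_nhds_unique hone' hone)

/-- Arithmetic step in the proof of Lemma 7: if `ω/π` is irrational or a rational `p/q` in
lowest terms with `q ≥ 4`, then along even `k` the quantity `sin (kω + η)` attains both
strictly positive and strictly negative values infinitely often. -/
theorem stmt3 (ω : ℝ) (hω : ω ∈ Set.Ioo 0 Real.pi)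
    (h : Irrational (ω / Real.pi) ∨
      ∃ p q : ℕ, 0 < p ∧ 0 < q ∧ Nat.Coprime p q ∧ 4 ≤ q ∧ ω / Real.pi = (p : ℝ) / q)
    (η : ℝ) :
    (∀ N : ℕ, ∃ k : ℕ, N < k ∧ Even k ∧ 0 < Real.sin (k * ω + η)) ∧
    (∀ N : ℕ, ∃ k : ℕ, N < k ∧ Even k ∧ Real.sin (k * ω + η) < 0) := by
  obtain ⟨hω0, hωπ⟩ := hω
  have hπ := Real.pi_pos
  have h1 : 0 < Real.sin ω := Real.sin_pos_of_pos_of_lt_pi hω0 hωπ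
  have h2 : Real.sin (2*ω) ≠ 0 := by
    intro hz
    rw [Real.sin_eq_zero_iff] at hz
    obtain ⟨n, hn⟩ := hz
    have hn1 : (n : ℝ) = 2 * ω / Real.pi := by
      field_simp at hn ⊢; linarith
    have hnpos : (0 : ℝ) < n := by rw [hn1]; positivity
    have hnlt : (n : ℝ) < 2 := by
      rw [hn1, div_lt_iff₀ hπ]
      linarith
    have hn1' : n = 1 := by
      have h0 : (0 : ℤ) < n := by exact_mod_cast hnpos
      have h2' : n < 2 := by exact_mod_cast hnlt
      omega
    subst hn1'
    have hωhalf : ω / Real.pi = 1 / 2 := by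
      push_cast at hn
      field_simp
      linarith
    rcases h with hirr | ⟨p, q, hp, hq, hcop, hq4, hpq⟩
    · rw [hωhalf] at hirr
      exact (Rat.not_irrational (1/2)) (by convert hirr using 1; norm_num)
    · rw [hωhalf] at hpq
      have : (2 : ℝ) * p = q := by
        field_simp at hpq
        linarith
      have hq2 : q = 2 * p := by exact_mod_cast this.symm
      have : p ∣ Nat.gcd p q := Nat.dvd_gcd dvd_rfl (hq2 ▸ dvd_mul_left p 2)
      rw [hcop] at this
      have hp1 : p = 1 := Nat.eq_one_of_dvd_one this
      omega
  constructor
  · intro N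
    obtain ⟨m, hm, hpos⟩ := key ω η h1 h2 N
    refine ⟨2 * m, by omega, even_two_mul m, ?_⟩
    convert hpos using 2
    push_cast
    ring
  · intro N
    obtain ⟨m, hm, hpos⟩ := key ω (η + Real.pi) h1 h2 N
    refine ⟨2 * m, by omega, even_two_mul m, ?_⟩
    have heq : (m : ℝ) * (2*ω) + (η + Real.pi) = ((2*m : ℕ) : ℝ) * ω + η + Real.pi := by
      push_cast; ring
    rw [heq, Real.sin_add_pi] at hpos
    linarith
end
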